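/- arXiv:2001.00469 — 2 statements merged into one kernel-verified Lean document; each statement's English description precedes it below -/
import Mathlib

section
/- For a connected graph G with at least 3 vertices, let c be an optimal packing coloring of G and define c' on FSSD_m(G) by c'(x) = 1 for every subdivided vertex x and c'(u) = c(u) + 1 for every original vertex u. Then c' is a packing coloring of FSSD_m(G) using χ_ρ(G) + 1 colors. -/
open SimpleGraph

/-- A `k`-packing coloring: colors in `{1,…,k}`, and distinct vertices with the same
color `i` are at distance greater than `i`. -/
def IsPackingColoring {V : Type*} (G : SimpleGraph V) (k : ℕ) (c : V → ℕ) : Prop :=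
  (∀ v, 1 ≤ c v ∧ c v ≤ k) ∧
  ∀ u v : V, u ≠ v → c u = c v → (c u : ℕ∞) < G.edist u v

/-- The packing chromatic number: the least `k` admitting a `k`-packing coloring. -/
noncomputable def packingChromaticNumber {V : Type*} (G : SimpleGraph V) : ℕ :=
  sInf {k | ∃ c : V → ℕ, IsPackingColoring G k c}

/-- The finite super subdivision `FSSD_m(G)`: each edge `uv` of `G` is replaced by
`m` new common neighbors of `u` and `v` (the original edge is deleted). -/
def FSSD {V : Type*} (G : SimpleGraph V) (m : ℕ) :
    SimpleGraph (V ⊕ (G.edgeSet × Fin m)) where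
  Adj x y :=
    match x, y with
    | Sum.inl u, Sum.inr e => u ∈ (e.1 : Sym2 V)
    | Sum.inr e, Sum.inl u => u ∈ (e.1 : Sym2 V)
    | _, _ => False
  symm := by constructor; rintro (u | e) (v | f) h <;> simp_all
  loopless := by constructor; rintro (u | e) h <;> simp_all

/-- The neighborhood corona `G ⋆ H`: one copy of `G` and one copy of `H` for each
vertex of `G`; each vertex of the `i`-th copy of `H` is joined to all neighbors of
the `i`-th vertex of `G`. -/
def ncorona {V₁ V₂ : Type*} (G : SimpleGraph V₁) (H : SimpleGraph V₂) :
    SimpleGraph (V₁ ⊕ (V₁ × V₂)) where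
  Adj x y :=
    match x, y with
    | Sum.inl u, Sum.inl v => G.Adj u v
    | Sum.inl u, Sum.inr p => G.Adj u p.1
    | Sum.inr p, Sum.inl u => G.Adj u p.1
    | Sum.inr p, Sum.inr q => p.1 = q.1 ∧ H.Adj p.2 q.2
  symm := by constructor; rintro (u | p) (v | q) h <;> simp_all [adj_comm]
  loopless := by constructor; rintro (u | p) h <;> simp_all

/-- The splitting graph `S'(G) = G ⋆ K₁`. -/
def splittingGraph {V : Type*} (G : SimpleGraph V) : SimpleGraph (V ⊕ (V × Fin 1)) :=
  ncorona G (⊥ : SimpleGraph (Fin 1))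

lemma fssd_walk_bound {V : Type*} (G : SimpleGraph V) (m : ℕ) :
    ∀ (n : ℕ) (u v : V) (p : (FSSD G m).Walk (Sum.inl u) (Sum.inl v)),
      p.length = n → 2 * G.edist u v ≤ (p.length : ℕ∞) := by
  intro n
  induction n using Nat.strong_induction_on with
  | _ n ih =>
    intro u v p hn
    cases p with
    | nil => simp
    | @cons _ x _ h q =>
      rcases x with w | e
      · exact absurd h (by simp [FSSD])
      · have he : u ∈ (e.1 : Sym2 V) := h
        cases q with
        | @cons _ y _ h' q' =>
          rcases y with w | f
          · have hw : w ∈ (e.1 : Sym2 V) := h'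
            have hlen : (Walk.cons h (Walk.cons h' q')).length = q'.length + 2 := by
              simp [Walk.length_cons]
            have hq' : 2 * G.edist w v ≤ (q'.length : ℕ∞) := by
              apply ih q'.length _ w v q' rfl
              omega
            by_cases huw : u = w
            · subst huw
              calc 2 * G.edist u v ≤ (q'.length : ℕ∞) := hq'
                _ ≤ _ := by rw [hlen]; push_cast; exact le_self_add
            · have hadj : G.Adj u w := by
                have h1 : (e.1 : Sym2 V) = s(u, w) := (Sym2.mem_and_mem_iff huw).mp ⟨he, hw⟩
                have h2 := e.1.2
                rw [h1, SimpleGraph.mem_edgeSet] at h2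
                exact h2
              have h3 : G.edist u v ≤ 1 + G.edist w v := by
                calc G.edist u v ≤ G.edist u w + G.edist w v := SimpleGraph.edist_triangle
                  _ = 1 + G.edist w v := by rw [edist_eq_one_iff_adj.mpr hadj]
              calc 2 * G.edist u v ≤ 2 * (1 + G.edist w v) := mul_le_mul_right h3 2
                _ = 2 + 2 * G.edist w v := by rw [mul_add, mul_one]
                _ ≤ 2 + (q'.length : ℕ∞) := add_le_add_right hq' 2
                _ = _ := by rw [hlen]; push_cast; ring
          · exact absurd h' (by simp [FSSD])

lemma fssd_edist_lb {V : Type*} (G : SimpleGraph V) (m : ℕ) (u v : V) :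
    2 * G.edist u v ≤ (FSSD G m).edist (Sum.inl u) (Sum.inl v) := by
  rw [SimpleGraph.edist_eq_sInf]
  apply le_sInf
  rintro _ ⟨p, rfl⟩
  exact fssd_walk_bound G m p.length u v p rfl

/-- from an optimal packing coloring `c` of `G`, the coloring of
`FSSD_m(G)` giving color `1` to subdivided vertices and `c(u) + 1` to original
vertices is a packing coloring using `χ_ρ(G) + 1` colors. -/
theorem stmt_10 {V : Type*} [Fintype V] (G : SimpleGraph V) (hG : G.Connected)
    (hV : 3 ≤ Fintype.card V) (m : ℕ) (hm : 1 ≤ m) (c : V → ℕ)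
    (hc : IsPackingColoring G (packingChromaticNumber G) c) :
    IsPackingColoring (FSSD G m) (packingChromaticNumber G + 1)
      (Sum.elim (fun u => c u + 1) (fun _ => 1)) := by
  obtain ⟨hbd, hdist⟩ := hc
  constructor
  · rintro (u | e)
    · have := hbd u; simp; omega
    · simp
  · rintro (u | e) (v | f) hne hcc
    · have hne' : u ≠ v := fun h => hne (by rw [h])
      simp only [Sum.elim_inl] at hcc ⊢
      have hcuv : c u = c v := by omega
      have hlt : (c u : ℕ∞) < G.edist u v := hdist u v hne' hcuv
      have h1 : (c u : ℕ∞) + 1 ≤ G.edist u v := Order.add_one_le_of_lt hlt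
      have h2 : ((c u + 1 : ℕ) : ℕ∞) < 2 * ((c u : ℕ∞) + 1) := by
        have : ((c u + 1 : ℕ) : ℕ∞) < ((2 * (c u + 1) : ℕ) : ℕ∞) :=
          Nat.cast_lt.mpr (by omega)
        convert this using 1
        try push_cast
        try ring
      calc ((c u + 1 : ℕ) : ℕ∞) < 2 * ((c u : ℕ∞) + 1) := h2
        _ ≤ 2 * G.edist u v := mul_le_mul_right h1 2
        _ ≤ (FSSD G m).edist (Sum.inl u) (Sum.inl v) := fssd_edist_lb G m u v
    · have := hbd u; simp at hcc; omega
    · have := hbd v; simp at hcc; omega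
    · simp only [Sum.elim_inr, Nat.cast_one]
      have hne0 : (FSSD G m).edist (Sum.inr e) (Sum.inr f) ≠ 0 :=
        (SimpleGraph.edist_pos_of_ne hne).ne'
      have hne1 : (FSSD G m).edist (Sum.inr e) (Sum.inr f) ≠ 1 := by
        rw [Ne, SimpleGraph.edist_eq_one_iff_adj]
        simp [FSSD]
      exact lt_of_le_of_ne (ENat.one_le_iff_ne_zero.mpr hne0) (Ne.symm hne1)
end

section
/- If n ≥ 3, p ≥ 2 and m ≥ 1, then the packing chromatic number of FSSD_m(K_n ⋆ P_p) equals n + 3. -/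
open SimpleGraph

section basics
variable {V : Type*} {G : SimpleGraph V} {m : ℕ}

@[simp] lemma fssd_adj_lr {u : V} {e : G.edgeSet × Fin m} :
    (FSSD G m).Adj (Sum.inl u) (Sum.inr e) ↔ u ∈ (e.1.1 : Sym2 V) := Iff.rfl

@[simp] lemma fssd_adj_rl {u : V} {e : G.edgeSet × Fin m} :
    (FSSD G m).Adj (Sum.inr e) (Sum.inl u) ↔ u ∈ (e.1.1 : Sym2 V) := Iff.rfl

@[simp] lemma fssd_not_adj_ll {u v : V} : ¬ (FSSD G m).Adj (Sum.inl u) (Sum.inl v) := fun h => h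

@[simp] lemma fssd_not_adj_rr {e f : G.edgeSet × Fin m} :
    ¬ (FSSD G m).Adj (Sum.inr e) (Sum.inr f) := fun h => h

/-- the subdivision vertex on edge `xy`. -/
def mkS (x y : V) (h : G.Adj x y) (k : Fin m) : V ⊕ (G.edgeSet × Fin m) :=
  Sum.inr (⟨s(x,y), h⟩, k)

lemma mkS_adj_left (x y : V) (h : G.Adj x y) (k : Fin m) :
    (FSSD G m).Adj (Sum.inl x) (mkS x y h k) := by
  simp [mkS]

lemma mkS_adj_right (x y : V) (h : G.Adj x y) (k : Fin m) :
    (FSSD G m).Adj (Sum.inl y) (mkS x y h k) := by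
  simp [mkS]

lemma edist_le_one_of_adj {W : Type*} {F : SimpleGraph W} {a b : W} (h : F.Adj a b) :
    F.edist a b ≤ 1 := by
  simpa using edist_le h.toWalk

lemma edist_le_succ_of_adj {W : Type*} {F : SimpleGraph W} {a b c : W} {k : ℕ}
    (h : F.Adj a b) (h2 : F.edist b c ≤ (k : ℕ∞)) : F.edist a c ≤ ((k+1 : ℕ) : ℕ∞) := by
  calc F.edist a c ≤ F.edist a b + F.edist b c := SimpleGraph.edist_triangle
    _ ≤ 1 + (k : ℕ∞) := add_le_add (edist_le_one_of_adj h) h2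
    _ = ((k+1:ℕ) : ℕ∞) := by push_cast; ring

lemma edist_le_of_chain2 {W : Type*} {F : SimpleGraph W} {a b c : W}
    (h1 : F.Adj a b) (h2 : F.Adj b c) : F.edist a c ≤ (2 : ℕ) :=
  edist_le_succ_of_adj h1 (by simpa using edist_le_one_of_adj h2)

lemma edist_le_of_chain3 {W : Type*} {F : SimpleGraph W} {a b c d : W}
    (h1 : F.Adj a b) (h2 : F.Adj b c) (h3 : F.Adj c d) : F.edist a d ≤ (3 : ℕ) :=
  edist_le_succ_of_adj h1 (edist_le_of_chain2 h2 h3)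

lemma edist_le_of_chain4 {W : Type*} {F : SimpleGraph W} {a b c d e : W}
    (h1 : F.Adj a b) (h2 : F.Adj b c) (h3 : F.Adj c d) (h4 : F.Adj d e) :
    F.edist a e ≤ (4 : ℕ) :=
  edist_le_succ_of_adj h1 (edist_le_of_chain3 h2 h3 h4)

lemma edist_le_of_chain5 {W : Type*} {F : SimpleGraph W} {a b c d e f : W}
    (h1 : F.Adj a b) (h2 : F.Adj b c) (h3 : F.Adj c d) (h4 : F.Adj d e) (h5 : F.Adj e f) :
    F.edist a f ≤ (5 : ℕ) :=
  edist_le_succ_of_adj h1 (edist_le_of_chain4 h2 h3 h4 h5)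

lemma lt_edist_of_walks {W : Type*} {F : SimpleGraph W} {a b : W} {k : ℕ}
    (hw : ∀ w : F.Walk a b, k < w.length) : (k : ℕ∞) < F.edist a b := by
  rcases eq_or_ne (F.edist a b) ⊤ with h | h
  · rw [h]; exact ENat.coe_lt_top _ -- name?
  · obtain ⟨w, hl⟩ := exists_walk_of_edist_ne_top h
    rw [← hl]
    exact_mod_cast hw w

/-- subdivision vertices are pairwise at distance > 1 -/
lemma sub_sub_dist {e f : G.edgeSet × Fin m} (hne : e ≠ f) :
    (1 : ℕ∞) < (FSSD G m).edist (Sum.inr e) (Sum.inr f) := by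
  apply lt_edist_of_walks
  intro w
  by_contra hle
  push_neg at hle
  interval_cases h : w.length
  · exact hne (Sum.inr_injective (SimpleGraph.Walk.eq_of_length_eq_zero h))
  · exact fssd_not_adj_rr (SimpleGraph.Walk.adj_of_length_eq_one h)

/-- distinct nonadjacent original vertices are at distance > 3 -/
lemma orig_orig_dist {x y : V} (hne : x ≠ y) (hadj : ¬ G.Adj x y) :
    (3 : ℕ∞) < (FSSD G m).edist (Sum.inl x) (Sum.inl y) := by
  apply lt_edist_of_walks
  intro w
  by_contra hle
  push_neg at hle
  cases w with
  | nil => exact hne rfl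
  | cons h1 w1 =>
    rename_i v1
    cases v1 with
    | inl z => exact fssd_not_adj_ll h1
    | inr e =>
      cases w1 with
      | cons h2 w2 =>
        rename_i v2
        cases v2 with
        | inr f => exact fssd_not_adj_rr h2
        | inl z =>
          cases w2 with
          | nil =>
            -- z = y, e contains x and y
            rw [fssd_adj_lr] at h1
            rw [fssd_adj_rl] at h2
            have : (e.1.1 : Sym2 V) = s(x, _) := (Sym2.mem_and_mem_iff hne).mp ⟨h1, h2⟩
            have he := e.1.2
            rw [this] at he
            exact hadj he
          | cons h3 w3 =>
            rename_i v3
            cases v3 with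
            | inl zz => exact fssd_not_adj_ll h3
            | inr f =>
              cases w3 with
              | cons h4 w4 =>
                simp [SimpleGraph.Walk.length_cons] at hle
                omega

end basics

section main
variable {n p m : ℕ}

/-- vertex type of the corona -/
abbrev VC (n p : ℕ) := Fin n ⊕ (Fin n × Fin p)

/-- the corona graph K_n ⋆ P_p -/
abbrev Gr (n p : ℕ) : SimpleGraph (VC n p) :=
  ncorona (⊤ : SimpleGraph (Fin n)) (SimpleGraph.pathGraph p)

@[simp] lemma gr_adj_uu {i j : Fin n} : (Gr n p).Adj (Sum.inl i) (Sum.inl j) ↔ i ≠ j := Iff.rfl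

@[simp] lemma gr_adj_ucp {i j : Fin n} {t : Fin p} :
    (Gr n p).Adj (Sum.inl i) (Sum.inr (j, t)) ↔ i ≠ j := Iff.rfl

@[simp] lemma gr_adj_cpu {i j : Fin n} {t : Fin p} :
    (Gr n p).Adj (Sum.inr (j, t)) (Sum.inl i) ↔ i ≠ j := Iff.rfl

@[simp] lemma gr_adj_cpcp {j j' : Fin n} {t t' : Fin p} :
    (Gr n p).Adj (Sum.inr (j, t)) (Sum.inr (j', t')) ↔
      j = j' ∧ (SimpleGraph.pathGraph p).Adj t t' := Iff.rfl

/-- the coloring witnessing the upper bound -/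
def col0 (n p m : ℕ) : (VC n p ⊕ ((Gr n p).edgeSet × Fin m)) → ℕ
  | Sum.inl (Sum.inl i) => 4 + i.val
  | Sum.inl (Sum.inr (_, t)) => 2 + t.val % 2
  | Sum.inr _ => 1

lemma col0_packing (hn : 3 ≤ n) : IsPackingColoring (FSSD (Gr n p) m) (n+3) (col0 n p m) := by
  constructor
  · rintro (x | e)
    · match x with
      | Sum.inl i => simp only [col0]; have := i.isLt; omega
      | Sum.inr (j, t) => simp only [col0]; omega
    · simp only [col0]; omega
  · rintro (x | e) (y | f) hne hc
    · -- both original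
      have hxy : x ≠ y := fun h => hne (by rw [h])
      match x, y with
      | Sum.inl i, Sum.inl i' =>
        exfalso; apply hxy
        simp only [col0] at hc
        have : i = i' := Fin.ext (by omega)
        rw [this]
      | Sum.inl i, Sum.inr (j, t) =>
        exfalso
        simp only [col0] at hc
        have : i.val < n := i.isLt
        omega
      | Sum.inr (j, t), Sum.inl i =>
        exfalso
        simp only [col0] at hc
        omega
      | Sum.inr (j, t), Sum.inr (j', t') =>
        have hcc : (col0 n p m (Sum.inl (Sum.inr (j, t)))) ≤ 3 := by simp [col0]; omega
        have hna : ¬ (Gr n p).Adj (Sum.inr (j, t)) (Sum.inr (j', t')) := by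
          simp only [gr_adj_cpcp, SimpleGraph.pathGraph_adj, not_and_or]
          simp only [col0] at hc
          by_cases hj : j = j'
          · right; omega
          · left; exact hj
        have := orig_orig_dist (m := m) hxy hna
        refine lt_of_le_of_lt ?_ this
        exact_mod_cast hcc
    · exfalso
      have h1 : 2 ≤ col0 n p m (Sum.inl x) := by
        match x with
        | Sum.inl i => simp only [col0]; omega
        | Sum.inr (j, t) => simp only [col0]; omega
      rw [hc] at h1; simp [col0] at h1
    · exfalso
      have h1 : 2 ≤ col0 n p m (Sum.inl y) := by
        match y with
        | Sum.inl i => simp only [col0]; omega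
        | Sum.inr (j, t) => simp only [col0]; omega
      rw [← hc] at h1; simp [col0] at h1
    · have hef : e ≠ f := fun h => hne (by rw [h])
      have := sub_sub_dist (G := Gr n p) hef
      simp only [col0]
      exact_mod_cast this

/-! vertices of the FSSD graph -/

abbrev VF (n p m : ℕ) := VC n p ⊕ ((Gr n p).edgeSet × Fin m)

def vU (n p m : ℕ) (i : Fin n) : VF n p m := Sum.inl (Sum.inl i)
def vC (n p m : ℕ) (j : Fin n) (t : Fin p) : VF n p m := Sum.inl (Sum.inr (j, t))

def sUU (i j : Fin n) (h : i ≠ j) (k : Fin m) : VF n p m :=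
  mkS (Sum.inl i : VC n p) (Sum.inl j) (gr_adj_uu.mpr h) k

def sUC (i j : Fin n) (t : Fin p) (h : i ≠ j) (k : Fin m) : VF n p m :=
  mkS (Sum.inl i : VC n p) (Sum.inr (j, t)) (gr_adj_ucp.mpr h) k

def sCC (j : Fin n) (t t' : Fin p) (h : (SimpleGraph.pathGraph p).Adj t t') (k : Fin m) :
    VF n p m :=
  mkS (Sum.inr (j, t) : VC n p) (Sum.inr (j, t')) (gr_adj_cpcp.mpr ⟨rfl, h⟩) k

/-! adjacency facts -/

lemma adj_vU_sUU_l {i j : Fin n} (h : i ≠ j) (k : Fin m) :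
    (FSSD (Gr n p) m).Adj (vU n p m i) (sUU i j h k) := mkS_adj_left _ _ _ _

lemma adj_vU_sUU_r {i j : Fin n} (h : i ≠ j) (k : Fin m) :
    (FSSD (Gr n p) m).Adj (vU n p m j) (sUU i j h k) := mkS_adj_right _ _ _ _

lemma adj_vU_sUC {i j : Fin n} {t : Fin p} (h : i ≠ j) (k : Fin m) :
    (FSSD (Gr n p) m).Adj (vU n p m i) (sUC i j t h k) := mkS_adj_left _ _ _ _

lemma adj_vC_sUC {i j : Fin n} {t : Fin p} (h : i ≠ j) (k : Fin m) :
    (FSSD (Gr n p) m).Adj (vC n p m j t) (sUC i j t h k) := mkS_adj_right _ _ _ _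

lemma adj_vC_sCC_l {j : Fin n} {t t' : Fin p} (h : (SimpleGraph.pathGraph p).Adj t t')
    (k : Fin m) : (FSSD (Gr n p) m).Adj (vC n p m j t) (sCC j t t' h k) := mkS_adj_left _ _ _ _

lemma adj_vC_sCC_r {j : Fin n} {t t' : Fin p} (h : (SimpleGraph.pathGraph p).Adj t t')
    (k : Fin m) : (FSSD (Gr n p) m).Adj (vC n p m j t') (sCC j t t' h k) := mkS_adj_right _ _ _ _

/-! distinctness of vertices -/

lemma vU_ne_sUC {i i' j : Fin n} {t : Fin p} {h : i' ≠ j} {k : Fin m} :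
    vU n p m i ≠ sUC i' j t h k := by simp [vU, sUC, mkS]

lemma vC_ne_sUC {j' i j : Fin n} {t' t : Fin p} {h : i ≠ j} {k : Fin m} :
    vC n p m j' t' ≠ sUC i j t h k := by simp [vC, sUC, mkS]

lemma vC_ne_sCC {j' j : Fin n} {t'' t t' : Fin p} {h} {k : Fin m} :
    vC n p m j' t'' ≠ sCC j t t' h k := by simp [vC, sCC, mkS]

lemma vU_ne_vC {i j : Fin n} {t : Fin p} : vU n p m i ≠ vC n p m j t := by simp [vU, vC]

lemma vU_ne_vU {i j : Fin n} (h : i ≠ j) : vU n p m i ≠ vU n p m j := by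
  simp [vU]; exact h

lemma vC_ne_vC {j j' : Fin n} {t t' : Fin p} (h : (j, t) ≠ (j', t')) :
    vC n p m j t ≠ vC n p m j' t' := by
  simp only [vC, ne_eq, Sum.inl.injEq, Sum.inr.injEq]; exact h

lemma sUU_ne_sUU {i i' j : Fin n} {h : i ≠ j} {h' : i' ≠ j} {k k' : Fin m} (hii : i ≠ i') :
    sUU (p := p) i j h k ≠ sUU i' j h' k' := by
  simp only [sUU, mkS, ne_eq, Sum.inr.injEq, Prod.mk.injEq, Subtype.ext_iff, Sym2.eq_iff]
  rintro ⟨(⟨h1, h2⟩ | ⟨h1, h2⟩), -⟩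
  · exact hii (by simpa using h1)
  · exact h (by simp at h1 h2; rw [h1, h2])

lemma sUU_ne_sUC {i' j' i j : Fin n} {t : Fin p} {h' : i' ≠ j'} {h : i ≠ j} {k k' : Fin m} :
    sUU (p := p) i' j' h' k' ≠ sUC i j t h k := by
  simp [sUU, sUC, mkS, Sym2.eq_iff, Subtype.ext_iff]

lemma sUC_ne_sUC {i i' j : Fin n} {t : Fin p} {h : i ≠ j} {h' : i' ≠ j} {k k' : Fin m}
    (hii : i ≠ i') : sUC i j t h k ≠ sUC i' j t h' k' := by
  simp only [sUC, mkS, ne_eq, Sum.inr.injEq, Prod.mk.injEq, Subtype.ext_iff, Sym2.eq_iff]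
  rintro ⟨(⟨h1, h2⟩ | ⟨h1, h2⟩), -⟩
  · exact hii (by simpa using h1)
  · simp at h1

lemma sUC_ne_sUC' {i i' j : Fin n} {t t' : Fin p} {jj : Fin n} {h : i ≠ j} {h' : i' ≠ jj}
    {k k' : Fin m} (hne : (j, t) ≠ (jj, t')) : sUC i j t h k ≠ sUC i' jj t' h' k' := by
  simp only [sUC, mkS, ne_eq, Sum.inr.injEq, Prod.mk.injEq, Subtype.ext_iff, Sym2.eq_iff]
  rintro ⟨(⟨h1, h2⟩ | ⟨h1, h2⟩), -⟩
  · exact hne (by simpa using h2)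
  · simp at h1

lemma sCC_ne_sUC {j t t' hcc i jj tt} {h : i ≠ jj} {k k' : Fin m} :
    sCC (n := n) (p := p) j t t' hcc k ≠ sUC i jj tt h k' := by
  simp [sCC, sUC, mkS, Sym2.eq_iff, Subtype.ext_iff]

lemma exists_two_ne (hn : 3 ≤ n) (col : Fin n) :
    ∃ x1 x2 : Fin n, x1 ≠ x2 ∧ x1 ≠ col ∧ x2 ≠ col := by
  by_cases h0 : col.val = 0
  · exact ⟨⟨1, by omega⟩, ⟨2, by omega⟩, by simp [Fin.ext_iff], by simp [Fin.ext_iff]; omega,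
      by simp [Fin.ext_iff]; omega⟩
  · by_cases h1 : col.val = 1
    · exact ⟨⟨0, by omega⟩, ⟨2, by omega⟩, by simp [Fin.ext_iff], by simp [Fin.ext_iff]; omega,
        by simp [Fin.ext_iff]; omega⟩
    · exact ⟨⟨0, by omega⟩, ⟨1, by omega⟩, by simp [Fin.ext_iff], by simp [Fin.ext_iff]; omega,
        by simp [Fin.ext_iff]; omega⟩

lemma color_pigeonhole {α : Type*} [Fintype α] (f : α → ℕ) (lo hi : ℕ)
    (hlo : ∀ x, lo ≤ f x) (hhi : ∀ x, f x ≤ hi) (hinj : Function.Injective f) :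
    Fintype.card α ≤ hi + 1 - lo := by
  have hg : Function.Injective (fun x => (⟨f x - lo, by have := hhi x; have := hlo x; omega⟩ :
      Fin (hi + 1 - lo))) := by
    intro x y hxy
    simp only [Fin.mk.injEq] at hxy
    exact hinj (by have := hlo x; have := hlo y; omega)
  simpa using Fintype.card_le_of_injective _ hg

lemma card_ne_fin (i : Fin n) : Fintype.card {x : Fin n // x ≠ i} = n - 1 := by
  simpa using Set.card_ne_eq i

/-- the star of `n + 3` subdivision vertices around hub `i` -/
def vertD (hpp : 2 ≤ p) (hm : 1 ≤ m) (i k1 k2 : Fin n) (h1 : k1 ≠ i) (h2 : k2 ≠ i) :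
    ({x : Fin n // x ≠ i} ⊕ (Bool × Bool)) → VF n p m
  | Sum.inl x => sUU x.1 i x.2 ⟨0, hm⟩
  | Sum.inr (a, b) => sUC i (if a then k1 else k2)
      (if b then (⟨0, by omega⟩ : Fin p) else ⟨1, by omega⟩)
      (by split
          · exact h1.symm
          · exact h2.symm) ⟨0, hm⟩

lemma vertD_adj (hpp : 2 ≤ p) (hm : 1 ≤ m) (i k1 k2 : Fin n) (h1 : k1 ≠ i) (h2 : k2 ≠ i)
    (d : {x : Fin n // x ≠ i} ⊕ (Bool × Bool)) :
    (FSSD (Gr n p) m).Adj (vU n p m i) (vertD hpp hm i k1 k2 h1 h2 d) := by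
  rcases d with ⟨x, hx⟩ | ⟨a, b⟩
  · simp only [vertD]
    exact adj_vU_sUU_r hx _
  · simp only [vertD]
    exact adj_vU_sUC _ _

lemma vertD_ne (hpp : 2 ≤ p) (hm : 1 ≤ m) (i k1 k2 : Fin n) (h1 : k1 ≠ i) (h2 : k2 ≠ i)
    (hk12 : k1 ≠ k2) {d d' : {x : Fin n // x ≠ i} ⊕ (Bool × Bool)} (hdd : d ≠ d') :
    vertD hpp hm i k1 k2 h1 h2 d ≠ vertD hpp hm i k1 k2 h1 h2 d' := by
  rcases d with ⟨x, hx⟩ | ⟨a, b⟩ <;> rcases d' with ⟨y, hy⟩ | ⟨a', b'⟩ <;> simp only [vertD]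
  · have hxy : x ≠ y := fun h => hdd (by simp [h])
    exact sUU_ne_sUU (h := hx) (h' := hy) hxy
  · exact sUU_ne_sUC
  · exact Ne.symm sUU_ne_sUC
  · by_cases haa : a = a'
    · subst haa
      have hbb : b ≠ b' := fun h => hdd (by simp [h])
      apply sUC_ne_sUC'
      cases b <;> cases b' <;> simp_all [Prod.ext_iff, Fin.ext_iff]
    · apply sUC_ne_sUC'
      cases a <;> cases a' <;> simp_all [Prod.ext_iff, hk12, Ne.symm hk12]

lemma no_col (hn : 3 ≤ n) (hp : 2 ≤ p) (hm : 1 ≤ m) :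
    ¬ ∃ c, IsPackingColoring (FSSD (Gr n p) m) (n+2) c := by
  rintro ⟨c, hb, hP⟩
  have hV : ∀ (a b : VF n p m) (k : ℕ), a ≠ b → c a = c b →
      (FSSD (Gr n p) m).edist a b ≤ (k : ℕ∞) → k ≤ c a → False := by
    intro a b k hne hc hle hk
    have hh1 := hP a b hne hc
    have h2 : (c a : ℕ∞) < (k : ℕ∞) := lt_of_lt_of_le hh1 hle
    have := Nat.cast_lt.mp h2
    omega
  -- Step 1: no hub vertex is colored 1
  have hU1 : ∀ i : Fin n, 2 ≤ c (vU n p m i) := by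
    intro i
    by_contra hlt
    push_neg at hlt
    have h1 : c (vU n p m i) = 1 := by have := (hb (vU n p m i)).1; omega
    obtain ⟨k1, k2, hk12, hk1i, hk2i⟩ := exists_two_ne hn i
    have hS2 : ∀ d, 2 ≤ c (vertD hp hm i k1 k2 hk1i hk2i d) := by
      intro d
      have hne : vU n p m i ≠ vertD hp hm i k1 k2 hk1i hk2i d :=
        (FSSD (Gr n p) m).ne_of_adj (vertD_adj hp hm i k1 k2 hk1i hk2i d)
      by_contra hc2
      push_neg at hc2
      have hcd : c (vertD hp hm i k1 k2 hk1i hk2i d) = 1 := by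
        have := (hb (vertD hp hm i k1 k2 hk1i hk2i d)).1; omega
      exact hV _ _ 1 hne (h1.trans hcd.symm)
        (edist_le_one_of_adj (vertD_adj hp hm i k1 k2 hk1i hk2i d)) (by omega)
    have hfinj : Function.Injective (fun d => c (vertD hp hm i k1 k2 hk1i hk2i d)) := by
      intro d d' heq
      by_contra hdd
      exact hV _ _ 2 (vertD_ne hp hm i k1 k2 hk1i hk2i hk12 hdd) heq
        (edist_le_of_chain2 (vertD_adj hp hm i k1 k2 hk1i hk2i d).symm
          (vertD_adj hp hm i k1 k2 hk1i hk2i d')) (hS2 d)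
    have hcard := color_pigeonhole _ 2 (n+2) hS2
      (fun d => (hb (vertD hp hm i k1 k2 hk1i hk2i d)).2) hfinj
    rw [Fintype.card_sum, card_ne_fin] at hcard
    simp only [Fintype.card_prod, Fintype.card_bool] at hcard
    omega

  -- notation
  have hU2 : ∀ v, c v ≤ n + 2 := fun v => (hb v).2
  -- Step 2: hubs have pairwise distinct colors
  have hUd : Function.Injective (fun i => c (vU n p m i)) := by
    intro i j heq
    by_contra hij
    exact hV (vU n p m i) (vU n p m j) 2 (vU_ne_vU hij) heq
      (edist_le_of_chain2 (adj_vU_sUU_l hij ⟨0, hm⟩) (adj_vU_sUU_r hij ⟨0, hm⟩).symm) (hU1 i)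
  -- Step 3: the missing color q
  set U : Finset ℕ := Finset.image (fun i => c (vU n p m i)) Finset.univ with hUdef
  have hUsub : U ⊆ Finset.Icc 2 (n+2) := by
    intro x hx
    rw [hUdef, Finset.mem_image] at hx
    obtain ⟨i, -, rfl⟩ := hx
    rw [Finset.mem_Icc]
    exact ⟨hU1 i, hU2 _⟩
  have hUcard : U.card = n := by
    rw [hUdef, Finset.card_image_of_injective _ hUd, Finset.card_univ, Fintype.card_fin]
  have hsd : (Finset.Icc 2 (n+2) \ U).card = 1 := by
    rw [Finset.card_sdiff_of_subset hUsub, Nat.card_Icc, hUcard]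
    omega
  obtain ⟨q, hq⟩ := Finset.card_eq_one.mp hsd
  have hqmem : q ∈ Finset.Icc 2 (n+2) ∧ q ∉ U := by
    have : q ∈ Finset.Icc 2 (n+2) \ U := hq ▸ Finset.mem_singleton_self q
    exact Finset.mem_sdiff.mp this
  have hq2n : 2 ≤ q ∧ q ≤ n + 2 := Finset.mem_Icc.mp hqmem.1
  have hqU : ∀ i, c (vU n p m i) ≠ q := by
    intro i h
    exact hqmem.2 (hUdef ▸ Finset.mem_image.mpr ⟨i, Finset.mem_univ i, h⟩)
  have hq2 : ∀ x, 2 ≤ x → x ≤ n + 2 → x ≠ q → ∃ i, c (vU n p m i) = x := by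
    intro x h2 hx hxq
    have hxI : x ∈ Finset.Icc 2 (n+2) := Finset.mem_Icc.mpr ⟨h2, hx⟩
    have hxU : x ∈ U := by
      by_contra hxU
      have : x ∈ Finset.Icc 2 (n+2) \ U := Finset.mem_sdiff.mpr ⟨hxI, hxU⟩
      rw [hq, Finset.mem_singleton] at this
      exact hxq this
    rw [hUdef, Finset.mem_image] at hxU
    obtain ⟨i, -, hi⟩ := hxU
    exact ⟨i, hi⟩
  -- Step 4: constraint on copy vertices
  have hCopy : ∀ (j : Fin n) (t : Fin p),
      c (vC n p m j t) = 1 ∨ c (vC n p m j t) = q ∨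
        (c (vC n p m j t) = c (vU n p m j) ∧ c (vU n p m j) ≤ 3) := by
    intro j t
    by_cases h1 : c (vC n p m j t) = 1
    · exact Or.inl h1
    by_cases hqq : c (vC n p m j t) = q
    · exact Or.inr (Or.inl hqq)
    refine Or.inr (Or.inr ?_)
    have h2 : 2 ≤ c (vC n p m j t) := by have := (hb (vC n p m j t)).1; omega
    obtain ⟨i, hi⟩ := hq2 _ h2 (hU2 _) hqq
    by_cases hij : i = j
    · subst hij
      refine ⟨hi.symm, ?_⟩
      by_contra h4
      push_neg at h4
      obtain ⟨x, -, -, hx, -⟩ := exists_two_ne hn i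
      exact hV (vC n p m i t) (vU n p m i) 4 (Ne.symm vU_ne_vC) (hi.symm)
        (edist_le_of_chain4 (adj_vC_sUC hx ⟨0, hm⟩) (adj_vU_sUC hx ⟨0, hm⟩).symm
          (adj_vU_sUU_l hx ⟨0, hm⟩) (adj_vU_sUU_r hx ⟨0, hm⟩).symm)
        (by omega)
    · exact (hV (vC n p m j t) (vU n p m i) 2 (Ne.symm vU_ne_vC) hi.symm
        (edist_le_of_chain2 (adj_vC_sUC hij ⟨0, hm⟩) (adj_vU_sUC hij ⟨0, hm⟩).symm) h2).elim
  -- Step SL: the star analysis at a copy vertex colored 1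
  have SL : ∀ (col : Fin n) (t t' : Fin p), (SimpleGraph.pathGraph p).Adj t t' →
      c (vC n p m col t) = 1 →
      q ≠ 2 ∧ c (vU n p m col) ≠ 2 ∧ c (vU n p m col) ≤ 4 ∧
      ∀ (i : Fin n) (h : i ≠ col) (k : Fin m),
        (c (sUC i col t h k) = 2 ∨ c (sUC i col t h k) = q) ∧
          c (sUC i col t h k) ≠ c (vU n p m i) := by
    intro col t t' htt' h1
    have hS2 : ∀ (i : Fin n) (h : i ≠ col) (k : Fin m), 2 ≤ c (sUC i col t h k) := by
      intro i h k
      by_contra hc2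
      push_neg at hc2
      have hcd : c (sUC i col t h k) = 1 := by have := (hb (sUC i col t h k)).1; omega
      exact hV _ _ 1 (Ne.symm vC_ne_sUC) (h1.trans hcd.symm).symm
        (edist_le_one_of_adj (adj_vC_sUC h k).symm) (by omega)
    have hSne : ∀ (i : Fin n) (h : i ≠ col) (k : Fin m), c (sUC i col t h k) ≠ c (vU n p m i) := by
      intro i h k heq
      exact hV _ _ 1 (Ne.symm vU_ne_sUC) heq
        (edist_le_one_of_adj (adj_vU_sUC h k).symm) (by have := hS2 i h k; omega)
    have hSmem : ∀ (i : Fin n) (h : i ≠ col) (k : Fin m),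
        c (sUC i col t h k) = 2 ∨ c (sUC i col t h k) = q := by
      intro i h k
      by_cases hqq : c (sUC i col t h k) = q
      · exact Or.inr hqq
      obtain ⟨i', hi'⟩ := hq2 _ (hS2 i h k) (hU2 _) hqq
      by_cases hii : i' = i
      · exact absurd (hii ▸ hi').symm (hSne i h k)
      · left
        by_contra hne2
        have h3 : 3 ≤ c (sUC i col t h k) := by have := hS2 i h k; omega
        exact hV (sUC i col t h k) (vU n p m i') 3 (Ne.symm vU_ne_sUC) hi'.symm
          (edist_le_of_chain3 (adj_vU_sUC h k).symm
            (adj_vU_sUU_l (Ne.symm hii) ⟨0, hm⟩) (adj_vU_sUU_r (Ne.symm hii) ⟨0, hm⟩).symm) h3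
    have hSdist : ∀ (i i' : Fin n) (h : i ≠ col) (h' : i' ≠ col) (k k' : Fin m), i ≠ i' →
        c (sUC i col t h k) ≠ c (sUC i' col t h' k') := by
      intro i i' h h' k k' hii heq
      exact hV _ _ 2 (sUC_ne_sUC hii) heq
        (edist_le_of_chain2 (adj_vC_sUC h k).symm (adj_vC_sUC h' k')) (hS2 i h k)
    obtain ⟨x1, x2, h12, hx1, hx2⟩ := exists_two_ne hn col
    have m1 := hSmem x1 hx1 ⟨0, hm⟩
    have m2 := hSmem x2 hx2 ⟨0, hm⟩
    have md := hSdist x1 x2 hx1 hx2 ⟨0, hm⟩ ⟨0, hm⟩ h12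
    have hqne2 : q ≠ 2 := by rcases m1 with m1 | m1 <;> rcases m2 with m2 | m2 <;> omega
    -- the subdivision vertex towards the path neighbour
    have hs32 : 2 ≤ c (sCC col t t' htt' ⟨0, hm⟩) := by
      by_contra hc2
      push_neg at hc2
      have hcd : c (sCC col t t' htt' ⟨0, hm⟩) = 1 := by
        have := (hb (sCC col t t' htt' ⟨0, hm⟩)).1; omega
      exact hV _ _ 1 (Ne.symm vC_ne_sCC) (hcd.trans h1.symm)
        (edist_le_one_of_adj (adj_vC_sCC_l htt' ⟨0, hm⟩).symm) (by omega)
    have hs3ne : ∀ (i : Fin n) (h : i ≠ col) (k : Fin m),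
        c (sCC col t t' htt' ⟨0, hm⟩) ≠ c (sUC i col t h k) := by
      intro i h k heq
      exact hV _ _ 2 sCC_ne_sUC heq
        (edist_le_of_chain2 (adj_vC_sCC_l htt' ⟨0, hm⟩).symm (adj_vC_sUC h k)) hs32
    have e1 := hs3ne x1 hx1 ⟨0, hm⟩
    have e2 := hs3ne x2 hx2 ⟨0, hm⟩
    have hs3notq : c (sCC col t t' htt' ⟨0, hm⟩) ≠ q ∧ c (sCC col t t' htt' ⟨0, hm⟩) ≠ 2 := by
      rcases m1 with m1 | m1 <;> rcases m2 with m2 | m2 <;> exact ⟨by omega, by omega⟩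
    obtain ⟨i', hi'⟩ := hq2 _ hs32 (hU2 _) hs3notq.1
    have hicol : i' = col := by
      by_contra hic
      exact hV (sCC col t t' htt' ⟨0, hm⟩) (vU n p m i') 3 (Ne.symm (by simp [vU, sCC, mkS]))
        hi'.symm
        (edist_le_of_chain3 (adj_vC_sCC_l htt' ⟨0, hm⟩).symm
          (adj_vC_sUC hic ⟨0, hm⟩) (adj_vU_sUC hic ⟨0, hm⟩).symm)
        (by have := hs3notq.2; omega)
    rw [hicol] at hi'
    have hcol4 : c (vU n p m col) ≤ 4 := by
      by_contra h5
      push_neg at h5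
      exact hV (sCC col t t' htt' ⟨0, hm⟩) (vU n p m col) 5 (Ne.symm (by simp [vU, sCC, mkS]))
        hi'.symm
        (edist_le_of_chain5 (adj_vC_sCC_l htt' ⟨0, hm⟩).symm (adj_vC_sUC hx1 ⟨0, hm⟩)
          (adj_vU_sUC hx1 ⟨0, hm⟩).symm (adj_vU_sUU_l hx1 ⟨0, hm⟩)
          (adj_vU_sUU_r hx1 ⟨0, hm⟩).symm)
        (by omega)
    exact ⟨hqne2, fun h => hs3notq.2 (hi'.symm.trans h),
      hcol4, fun i h k => ⟨hSmem i h k, hSne i h k⟩⟩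
  -- positions 0 and 1 on the path
  have hpa : (SimpleGraph.pathGraph p).Adj ⟨0, by omega⟩ ⟨1, by omega⟩ :=
    SimpleGraph.pathGraph_adj.mpr (Or.inl rfl)
  have hp01 : (⟨0, by omega⟩ : Fin p) ≠ ⟨1, by omega⟩ := by simp [Fin.ext_iff]
  -- Step K
  have K : ∀ jj : Fin n, 4 ≤ c (vU n p m jj) → c (vU n p m jj) = 4 ∧
      ∃ (t0 t1 : Fin p), (SimpleGraph.pathGraph p).Adj t0 t1 ∧ c (vC n p m jj t0) = 1 ∧
        ∀ (i : Fin n) (h : i ≠ jj) (k : Fin m),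
          (c (sUC i jj t0 h k) = 2 ∨ c (sUC i jj t0 h k) = q) ∧
            c (sUC i jj t0 h k) ≠ c (vU n p m i) := by
    intro jj h4
    have hopt : ∀ t : Fin p, c (vC n p m jj t) = 1 ∨ c (vC n p m jj t) = q := by
      intro t
      rcases hCopy jj t with h | h | ⟨-, h3⟩
      · exact Or.inl h
      · exact Or.inr h
      · omega
    have hone : c (vC n p m jj ⟨0, by omega⟩) = 1 ∨ c (vC n p m jj ⟨1, by omega⟩) = 1 := by
      by_contra hno
      push_neg at hno
      have g0 : c (vC n p m jj ⟨0, by omega⟩) = q := (hopt _).resolve_left hno.1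
      have g1 : c (vC n p m jj ⟨1, by omega⟩) = q := (hopt _).resolve_left hno.2
      exact hV _ _ 2 (vC_ne_vC (by simp [Prod.ext_iff, Fin.ext_iff])) (g0.trans g1.symm)
        (edist_le_of_chain2 (adj_vC_sCC_l hpa ⟨0, hm⟩) (adj_vC_sCC_r hpa ⟨0, hm⟩).symm)
        (by omega)
    rcases hone with hone | hone
    · obtain ⟨-, h2, h44, hstar⟩ := SL jj _ _ hpa hone
      exact ⟨by omega, ⟨0, by omega⟩, ⟨1, by omega⟩, hpa, hone, fun i h k => hstar i h k⟩
    · obtain ⟨-, h2, h44, hstar⟩ := SL jj _ _ hpa.symm hone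
      exact ⟨by omega, ⟨1, by omega⟩, ⟨0, by omega⟩, hpa.symm, hone, fun i h k => hstar i h k⟩
  -- some hub has colour ≥ 4
  obtain ⟨j, hj4⟩ : ∃ j : Fin n, 4 ≤ c (vU n p m j) := by
    by_contra hno
    push_neg at hno
    have hUsub3 : U ⊆ Finset.Icc 2 3 := by
      intro x hx
      rw [hUdef, Finset.mem_image] at hx
      obtain ⟨i, -, rfl⟩ := hx
      rw [Finset.mem_Icc]
      exact ⟨hU1 i, by have := hno i; omega⟩
    have := Finset.card_le_card hUsub3
    rw [hUcard, Nat.card_Icc] at this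
    omega
  obtain ⟨hj4eq, t0, t1, ht01, hct0, hstar⟩ := K j hj4
  -- q ≥ 5
  have hqne2 : q ≠ 2 := (SL j t0 t1 ht01 hct0).1
  have hq5 : 5 ≤ q := by
    by_contra hlt
    push_neg at hlt
    have hq3 : q = 3 := by
      have h4q : q ≠ 4 := fun h => hqU j (by omega)
      omega
    obtain ⟨j', hj'⟩ := hq2 5 (by omega) (by omega) (by omega)
    have := (K j' (by omega)).1
    omega
  -- the hub coloured 2
  obtain ⟨a, ha2⟩ := hq2 2 le_rfl (by omega) (by omega)
  have haj : a ≠ j := fun h => by rw [h, hj4eq] at ha2; omega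
  -- the subdivision vertex between hub a and (j, t0) is coloured q
  have hsaq : c (sUC a j t0 haj ⟨0, hm⟩) = q := by
    rcases (hstar a haj ⟨0, hm⟩).1 with h | h
    · exact absurd (h.trans ha2.symm) (hstar a haj ⟨0, hm⟩).2
    · exact h
  -- no copy vertex in column a is coloured 1
  have hnet : ∀ (t t' : Fin p), (SimpleGraph.pathGraph p).Adj t t' → c (vC n p m a t) ≠ 1 := by
    intro t t' h h1
    exact (SL a t t' h h1).2.1 ha2
  -- hence the two first copies in column a are coloured q or 2, and differ
  have hoA : ∀ t : Fin p, (SimpleGraph.pathGraph p).Adj t t → False := fun t h => h.ne rfl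
  have h0A : c (vC n p m a ⟨0, by omega⟩) = q ∨ c (vC n p m a ⟨0, by omega⟩) = 2 := by
    rcases hCopy a ⟨0, by omega⟩ with h | h | ⟨h, -⟩
    · exact absurd h (hnet _ _ hpa)
    · exact Or.inl h
    · exact Or.inr (by rw [h, ha2])
  have h1A : c (vC n p m a ⟨1, by omega⟩) = q ∨ c (vC n p m a ⟨1, by omega⟩) = 2 := by
    rcases hCopy a ⟨1, by omega⟩ with h | h | ⟨h, -⟩
    · exact absurd h (hnet _ _ hpa.symm)
    · exact Or.inl h
    · exact Or.inr (by rw [h, ha2])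
  have hne01 : c (vC n p m a ⟨0, by omega⟩) ≠ c (vC n p m a ⟨1, by omega⟩) := by
    intro heq
    exact hV _ _ 2 (vC_ne_vC (by simp [Prod.ext_iff, Fin.ext_iff])) heq
      (edist_le_of_chain2 (adj_vC_sCC_l hpa ⟨0, hm⟩) (adj_vC_sCC_r hpa ⟨0, hm⟩).symm)
      (by rcases h0A with h | h <;> omega)
  have hts : ∃ ts : Fin p, c (vC n p m a ts) = q := by
    rcases h0A with h | h
    · exact ⟨_, h⟩
    · rcases h1A with h' | h'
      · exact ⟨_, h'⟩
      · exact absurd (h.trans h'.symm) hne01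
  obtain ⟨ts, hts⟩ := hts
  -- a third hub b
  obtain ⟨b, hb1, hb2⟩ : ∃ b : Fin n, b ≠ a ∧ b ≠ j := by
    obtain ⟨x1, x2, h12, hx1, hx2⟩ := exists_two_ne hn a
    by_cases hx1j : x1 = j
    · exact ⟨x2, hx2, fun h => h12 (hx1j ▸ h ▸ rfl)⟩
    · exact ⟨x1, hx1, hx1j⟩
  -- final contradiction : two vertices coloured q ≥ 5 at distance ≤ 5
  exact hV (vC n p m a ts) (sUC a j t0 haj ⟨0, hm⟩) 5 vC_ne_sUC (hts.trans hsaq.symm)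
    (edist_le_of_chain5 (adj_vC_sUC hb1 ⟨0, hm⟩) (adj_vU_sUC hb1 ⟨0, hm⟩).symm
      (adj_vU_sUC hb2 ⟨0, hm⟩) (adj_vC_sUC hb2 ⟨0, hm⟩).symm
      (adj_vC_sUC haj ⟨0, hm⟩))
    (by omega)

end main

theorem stmt_11' (n p m : ℕ) (hn : 3 ≤ n) (hp : 2 ≤ p) (hm : 1 ≤ m) :
    packingChromaticNumber
      (FSSD (ncorona (⊤ : SimpleGraph (Fin n)) (SimpleGraph.pathGraph p)) m) =
      n + 3 := by
  unfold packingChromaticNumber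
  set S := {k | ∃ c, IsPackingColoring
    (FSSD (ncorona (⊤ : SimpleGraph (Fin n)) (SimpleGraph.pathGraph p)) m) k c} with hS
  have hmem : n + 3 ∈ S := ⟨col0 n p m, col0_packing hn⟩
  have hSne : S.Nonempty := ⟨n + 3, hmem⟩
  apply le_antisymm
  · exact Nat.sInf_le hmem
  · obtain ⟨c, hb, hP⟩ := Nat.sInf_mem hSne
    by_contra hlt
    push_neg at hlt
    have hle : sInf S ≤ n + 2 := by omega
    exact no_col hn hp hm ⟨c, fun v => ⟨(hb v).1, le_trans (hb v).2 hle⟩, hP⟩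

/-- `χ_ρ(FSSD_m(K_n ⋆ P_p)) = n + 3` for `n ≥ 3`, `p ≥ 2`, `m ≥ 1`. -/
theorem stmt_11 (n p m : ℕ) (hn : 3 ≤ n) (hp : 2 ≤ p) (hm : 1 ≤ m) :
    packingChromaticNumber
      (FSSD (ncorona (⊤ : SimpleGraph (Fin n)) (SimpleGraph.pathGraph p)) m) =
      n + 3 :=
  stmt_11' n p m hn hp hm
end
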